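/- ZO-SGD per-step bound: suppose L is L-smooth and the zeroth-order estimator satisfies E[‖ĝ(w)‖²] ≤ 2(d+4)(‖∇L(w)‖² + γ²) + (μ²/2)L²(d+6)³ and E[ĝ(w)] = ∇L(w). If the step size satisfies η ≤ 1/(2L(d+4)), then the update w_{t+1} = w_t − ηĝ(w_t) satisfies E[L(w_{t+1}) | w_t] ≤ L(w_t) − (η/2)‖∇L(w_t)‖² + Lη²(γ²(d+4) + (L²μ²/4)(d+6)³). -/

import Mathlib

open MeasureTheory InnerProductSpace RealInnerProductSpace

section aux
variable {F : Type*} [NormedAddCommGroup F] [InnerProductSpace ℝ F] [CompleteSpace F]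

lemma descent_lemma {f : F → ℝ} {g : F → F}
    (hgrad : ∀ x, HasGradientAt f (g x) x)
    {L : ℝ} (hL : 0 ≤ L) (hlip : ∀ x y, ‖g x - g y‖ ≤ L * ‖x - y‖)
    (w y : F) :
    f y ≤ f w + ⟪g w, y - w⟫_ℝ + L / 2 * ‖y - w‖ ^ 2 := by
  set v := y - w with hv
  have hcont : Continuous g := by
    rcases eq_or_lt_of_le hL with h | h
    · have : ∀ x z, g x = g z := by
        intro x z
        have := hlip x z
        rw [← h] at this
        simpa [norm_le_zero_iff, sub_eq_zero] using this
      exact continuous_const.congr fun x => (this w x)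
    · exact (LipschitzWith.of_dist_le_mul (K := ⟨L, hL⟩) (fun x z => by
        rw [dist_eq_norm, dist_eq_norm]; exact hlip x z)).continuous
  have hφ : ∀ t : ℝ, HasDerivAt (fun t : ℝ => f (w + t • v)) ⟪g (w + t • v), v⟫_ℝ t := by
    intro t
    have h1 : HasDerivAt (fun t : ℝ => w + t • v) v t := by
      simpa using ((hasDerivAt_id t).smul_const v).const_add w
    have h2 := (hgrad (w + t • v)).hasFDerivAt.comp_hasDerivAt t h1
    simpa [InnerProductSpace.toDual_apply_apply, Function.comp_def] using h2
  have hcont2 : Continuous fun t : ℝ => ⟪g (w + t • v), v⟫_ℝ := by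
    exact (hcont.comp (by continuity)).inner continuous_const
  have key : f (w + (1:ℝ) • v) - f (w + (0:ℝ) • v)
      = ∫ t in (0:ℝ)..1, ⟪g (w + t • v), v⟫_ℝ := by
    rw [← intervalIntegral.integral_eq_sub_of_hasDerivAt (fun t _ => hφ t)
      (hcont2.intervalIntegrable 0 1)]
  have hbound : ∫ t in (0:ℝ)..1, ⟪g (w + t • v), v⟫_ℝ
      ≤ ∫ t in (0:ℝ)..1, (⟪g w, v⟫_ℝ + L * t * ‖v‖ ^ 2) := by
    apply intervalIntegral.integral_mono_on zero_le_one (hcont2.intervalIntegrable 0 1)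
      ((by continuity : Continuous fun t : ℝ => ⟪g w, v⟫_ℝ + L * t * ‖v‖ ^ 2).intervalIntegrable 0 1)
    intro t ht
    have : ⟪g (w + t • v), v⟫_ℝ - ⟪g w, v⟫_ℝ = ⟪g (w + t • v) - g w, v⟫_ℝ := by
      rw [inner_sub_left]
    have h3 : ⟪g (w + t • v) - g w, v⟫_ℝ ≤ ‖g (w + t • v) - g w‖ * ‖v‖ :=
      real_inner_le_norm _ _
    have h4 : ‖g (w + t • v) - g w‖ ≤ L * ‖t • v‖ := by
      simpa using hlip (w + t • v) w
    have h5 : ‖t • v‖ = t * ‖v‖ := by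
      rw [norm_smul, Real.norm_eq_abs, abs_of_nonneg ht.1]
    have h6 : ‖g (w + t • v) - g w‖ * ‖v‖ ≤ L * t * ‖v‖ ^ 2 := by
      calc ‖g (w + t • v) - g w‖ * ‖v‖ ≤ (L * ‖t • v‖) * ‖v‖ :=
            mul_le_mul_of_nonneg_right h4 (norm_nonneg v)
        _ = L * t * ‖v‖ ^ 2 := by rw [h5]; ring
    linarith [this ▸ (h3.trans h6)]
  have hint : ∫ t in (0:ℝ)..1, (⟪g w, v⟫_ℝ + L * t * ‖v‖ ^ 2)
      = ⟪g w, v⟫_ℝ + L / 2 * ‖v‖ ^ 2 := by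
    have he : (fun t : ℝ => ⟪g w, v⟫_ℝ + L * t * ‖v‖ ^ 2)
        = fun t : ℝ => ⟪g w, v⟫_ℝ + (L * ‖v‖ ^ 2) * t := by ext t; ring
    rw [he, intervalIntegral.integral_add (intervalIntegrable_const)
      ((by continuity : Continuous fun t : ℝ => (L * ‖v‖ ^ 2) * t).intervalIntegrable 0 1),
      intervalIntegral.integral_const_mul, integral_id]
    simp
    ring
  have := key ▸ hbound
  simp only [one_smul, zero_smul, add_zero] at this
  rw [hv] at this ⊢
  simp only [add_sub_cancel] at this
  linarith [hint ▸ this]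
end aux


/-- ZO-SGD per-step bound: with an unbiased zeroth-order gradient estimator whose second
moment satisfies the Gaussian-smoothing bound, and step size `η ≤ 1/(2L(d+4))`, one step
of ZO-SGD satisfies the stated expected descent inequality.
`ν` is the distribution of the estimator `ĝ(w)`. -/
theorem zo_sgd_per_step_bound (d : ℕ)
    (f : EuclideanSpace ℝ (Fin d) → ℝ)
    (g : EuclideanSpace ℝ (Fin d) → EuclideanSpace ℝ (Fin d))
    (hgrad : ∀ x, HasGradientAt f (g x) x)
    (L : ℝ) (hL : 0 < L) (hlip : ∀ x y, ‖g x - g y‖ ≤ L * ‖x - y‖)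
    (γ μ η : ℝ) (hμ : 0 < μ) (hη : 0 < η)
    (hηle : η ≤ 1 / (2 * L * (d + 4)))
    (w : EuclideanSpace ℝ (Fin d))
    (ν : Measure (EuclideanSpace ℝ (Fin d))) [IsProbabilityMeasure ν]
    (hmean : ∫ x, x ∂ν = g w)
    (hint1 : Integrable (fun x => x) ν)
    (hint2 : Integrable (fun x => ‖x‖ ^ 2) ν)
    (hint3 : Integrable (fun x => f (w - η • x)) ν)
    (hvar : ∫ x, ‖x‖ ^ 2 ∂ν ≤
      2 * (d + 4) * (‖g w‖ ^ 2 + γ ^ 2) + (μ ^ 2 / 2) * L ^ 2 * (d + 6) ^ 3) :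
    ∫ x, f (w - η • x) ∂ν ≤
      f w - (η / 2) * ‖g w‖ ^ 2
        + L * η ^ 2 * (γ ^ 2 * (d + 4) + (L ^ 2 * μ ^ 2 / 4) * (d + 6) ^ 3) := by
  have hdesc : ∀ x, f (w - η • x)
      ≤ f w - η * ⟪g w, x⟫_ℝ + L / 2 * η ^ 2 * ‖x‖ ^ 2 := by
    intro x
    have h := descent_lemma hgrad hL.le hlip w (w - η • x)
    have h1 : w - η • x - w = -(η • x) := by abel
    rw [h1] at h
    have h2 : ⟪g w, -(η • x)⟫_ℝ = -(η * ⟪g w, x⟫_ℝ) := by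
      rw [inner_neg_right, real_inner_smul_right]
    have h3 : ‖-(η • x)‖ ^ 2 = η ^ 2 * ‖x‖ ^ 2 := by
      rw [norm_neg, norm_smul, Real.norm_eq_abs, mul_pow, sq_abs]
    rw [h2, h3] at h
    linarith
  have hinner : Integrable (fun x => ⟪g w, x⟫_ℝ) ν := by
    exact (innerSL ℝ (g w)).integrable_comp hint1
  have hrhs : Integrable
      (fun x => f w - η * ⟪g w, x⟫_ℝ + L / 2 * η ^ 2 * ‖x‖ ^ 2) ν := by
    exact ((integrable_const (f w)).sub (hinner.const_mul η)).add (hint2.const_mul _)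
  have hmono := integral_mono hint3 hrhs hdesc
  have hintval : ∫ x, ⟪g w, x⟫_ℝ ∂ν = ‖g w‖ ^ 2 := by
    have := (innerSL ℝ (g w)).integral_comp_comm hint1
    simp only [innerSL_apply_apply] at this
    rw [this, hmean, real_inner_self_eq_norm_sq]
  have hcalc : ∫ x, (f w - η * ⟪g w, x⟫_ℝ + L / 2 * η ^ 2 * ‖x‖ ^ 2) ∂ν
      = f w - η * ‖g w‖ ^ 2 + L / 2 * η ^ 2 * ∫ x, ‖x‖ ^ 2 ∂ν := by
    have ha : Integrable (fun x => f w - η * ⟪g w, x⟫_ℝ) ν :=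
      (integrable_const (f w)).sub (hinner.const_mul η)
    have hb : Integrable (fun x => L / 2 * η ^ 2 * ‖x‖ ^ 2) ν := hint2.const_mul _
    have hc : Integrable (fun x => η * ⟪g w, x⟫_ℝ) ν := hinner.const_mul η
    rw [integral_add ha hb, integral_sub (integrable_const (f w)) hc,
      integral_const_mul, integral_const_mul, hintval, integral_const]
    simp
  rw [hcalc] at hmono
  have hd : (0:ℝ) < 2 * L * (d + 4) := by positivity
  have h7 : L * η * (d + 4) ≤ 1 / 2 := by
    rw [le_div_iff₀ hd] at hηle
    nlinarith
  have hcoef : (0:ℝ) ≤ L / 2 * η ^ 2 := by positivity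
  have h8 := mul_le_mul_of_nonneg_left hvar hcoef
  have h9 := mul_le_mul_of_nonneg_right h7 (mul_nonneg hη.le (sq_nonneg ‖g w‖))
  nlinarith [sq_nonneg ‖g w‖]
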